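/- Let t be a labeled tree with labels in a finite set and suppose on some branch there exist nodes u <_T v with t(u) = t(v). Define the collapse operation replacing the subtree at u by the subtree at v (relabeling nodes consistently with the naming scheme of u's position). Then the resulting structure is again a prefix-closed labeled tree, its set of nodes is a strict subset (in cardinality) of the original when u ≠ v and T[u] \ T[v] is nonempty, and every node of the new tree has a unique counterpart node in the old tree with the same label. -/

import Mathlib

/-- Replacing the subtree at `u` by the subtree at `v` (renaming nodes to `u`'s position). -/
def collapseTree (T : Set (List ℕ)) (u v : List ℕ) : Set (List ℕ) :=
  {x | x ∈ T ∧ ¬ u <+: x} ∪ {x | ∃ s : List ℕ, x = u ++ s ∧ v ++ s ∈ T}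

/-- The counterpart in the original tree of a node of the collapsed tree. -/
def counterpart (u v x : List ℕ) : List ℕ :=
  if u <+: x then v ++ x.drop u.length else x

/-- Well-definedness of the collapse operation: for `u <_T v` with equal labels, the
collapsed structure is again a prefix-closed tree, it has strictly fewer nodes when
`T[u] \ T[v]` is nonempty, and every node of the new tree has a unique counterpart
node in the old tree. -/
theorem stmt12 {Λ : Type*} [Fintype Λ] (T : Set (List ℕ)) (ℓ : List ℕ → Λ)
    (hfin : T.Finite)
    (hpref : ∀ x y : List ℕ, x <+: y → y ∈ T → x ∈ T)
    (u v : List ℕ) (hu : u ∈ T) (hv : v ∈ T) (huv : u <+: v) (hne : u ≠ v)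
    (hlab : ℓ u = ℓ v)
    (hdiff : ∃ w ∈ T, u <+: w ∧ ¬ v <+: w) :
    (∀ x y : List ℕ, x <+: y → y ∈ collapseTree T u v → x ∈ collapseTree T u v) ∧
    (collapseTree T u v).ncard < T.ncard ∧
    (∀ x ∈ collapseTree T u v, counterpart u v x ∈ T ∧
      ∃! y : List ℕ, y ∈ T ∧ y = counterpart u v x) := by
  have cp_mem : ∀ x ∈ collapseTree T u v, counterpart u v x ∈ T := by
    rintro x (⟨hxT, hnux⟩ | ⟨s, rfl, hs⟩)
    · simpa [counterpart, hnux] using hxT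
    · simpa [counterpart, List.prefix_append, List.drop_left] using hs
  have cp_inj : Set.InjOn (counterpart u v) (collapseTree T u v) := by
    rintro x hx y hy hxy
    unfold counterpart at hxy
    by_cases h1 : u <+: x <;> by_cases h2 : u <+: y <;> simp [h1, h2] at hxy
    · obtain ⟨s, rfl⟩ := h1; obtain ⟨t, rfl⟩ := h2
      simp only [List.drop_left, List.append_cancel_left_eq] at hxy
      rw [hxy]
    · exfalso
      rcases hy with ⟨hyT, hnuy⟩ | ⟨s, rfl, _⟩
      · exact hnuy (huv.trans (hxy ▸ List.prefix_append v _))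
      · exact h2 (List.prefix_append u s)
    · exfalso
      rcases hx with ⟨hxT, hnux⟩ | ⟨s, rfl, _⟩
      · exact hnux (huv.trans (hxy ▸ List.prefix_append v _))
      · exact h1 (List.prefix_append u s)
    · exact hxy
  refine ⟨?_, ?_, ?_⟩
  · rintro x y hxy (⟨hyT, hnuy⟩ | ⟨s, rfl, hs⟩)
    · exact Or.inl ⟨hpref x y hxy hyT, fun h => hnuy (h.trans hxy)⟩
    · by_cases h : u <+: x
      · obtain ⟨t, rfl⟩ := h
        rw [List.prefix_append_right_inj] at hxy
        exact Or.inr ⟨t, rfl, hpref _ _ ((List.prefix_append_right_inj v).mpr hxy) hs⟩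
      · rcases List.prefix_or_prefix_of_prefix hxy (List.prefix_append u s) with hxu | hux
        · exact Or.inl ⟨hpref x u hxu hu, h⟩
        · exact absurd hux h
  · obtain ⟨w, hwT, huw, hnvw⟩ := hdiff
    have hw : w ∉ counterpart u v '' collapseTree T u v := by
      rintro ⟨x, hx, rfl⟩
      unfold counterpart at huw hnvw
      by_cases h : u <+: x
      · simp only [h, if_true] at hnvw
        exact hnvw (List.prefix_append v _)
      · rw [if_neg h] at huw
        exact h huw
    have him : counterpart u v '' collapseTree T u v ⊆ T \ {w} := by
      rintro y ⟨x, hx, rfl⟩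
      exact ⟨cp_mem x hx, fun hy => hw ⟨x, hx, hy⟩⟩
    have hcfin : (collapseTree T u v).Finite :=
      Set.Finite.of_finite_image (hfin.subset (fun y ⟨x, hx, hy⟩ => hy ▸ cp_mem x hx)) cp_inj
    calc (collapseTree T u v).ncard
        = (counterpart u v '' collapseTree T u v).ncard := (Set.ncard_image_of_injOn cp_inj).symm
      _ ≤ (T \ {w}).ncard := Set.ncard_le_ncard him hfin.diff
      _ < T.ncard := Set.ncard_diff_singleton_lt_of_mem hwT hfin
  · exact fun x hx => ⟨cp_mem x hx, counterpart u v x, ⟨cp_mem x hx, rfl⟩,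
      fun y hy => hy.2⟩
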